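/- Let j, ω ∈ ℂ satisfy j⁴ = 1 and ω³ = i^{n/2} j⁻¹ (with i^{n/2} = e^{πin/4}). Then the operators S' = j·ℱ_E and T' = ω·𝒢_E⁻¹ acting on Schwartz functions on E satisfy the SL(2,ℤ) relations S'⁴ = Id and S'² = (S'T')³. -/

import Mathlib

open MeasureTheory Complex Filter Topology
open scoped Real RealInnerProductSpace BigOperators FourierTransform

set_option synthInstance.maxHeartbeats 400000
set_option maxHeartbeats 1000000

noncomputable section


/-- `ℝⁿ` as a Euclidean space. -/
abbrev EN (n : ℕ) := EuclideanSpace ℝ (Fin n)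

/-- The operator `S' = j·ℱ_E`, where `ℱ_E(f)(θ) = ∫_E f(θ̃) e^{2πi⟨θ,θ̃⟩} dθ̃`. -/
def Sprime {n : ℕ} (j : ℂ) (g : EN n → ℂ) : EN n → ℂ :=
  fun θ => j * ∫ θt : EN n, g θt * Complex.exp (2 * (π : ℂ) * I * (⟪θ, θt⟫ : ℂ))

/-- The operator `T' = ω·𝒢_E⁻¹`, i.e. `T'(f)(θ) = ω e^{-πi⟨θ,θ⟩} f(θ)`. -/
def Tprime {n : ℕ} (ω : ℂ) (g : EN n → ℂ) : EN n → ℂ :=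
  fun θ => ω * Complex.exp (-(π : ℂ) * I * (⟪θ, θ⟫ : ℂ)) * g θ


lemma iteratedDeriv_cexp_const_mul_real (c : ℂ) :
    ∀ (i : ℕ), iteratedDeriv i (fun t : ℝ => Complex.exp (c * (t : ℂ))) =
      fun t : ℝ => c ^ i * Complex.exp (c * (t : ℂ)) := by
  intro i
  induction i with
  | zero => simp
  | succ i ih =>
    rw [iteratedDeriv_succ, ih]
    funext t
    have H : HasDerivAt (fun t : ℝ => Complex.exp (c * (t : ℂ)))
        (c * Complex.exp (c * (t : ℂ))) t := by
      have h1 : HasDerivAt (fun z : ℂ => Complex.exp (c * z))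
          (c * Complex.exp (c * (t : ℂ))) ((t : ℝ) : ℂ) := by
        simpa [mul_comm] using ((hasDerivAt_id ((t : ℝ) : ℂ)).const_mul c).cexp
      exact h1.comp_ofReal
    rw [deriv_const_mul _ H.differentiableAt, H.deriv]
    ring

lemma norm_iteratedFDeriv_id_le {E : Type*} [NormedAddCommGroup E] [NormedSpace ℝ E]
    (i : ℕ) (x : E) : ‖iteratedFDeriv ℝ i (fun y : E => y) x‖ ≤ 1 + ‖x‖ := by
  have h0 : (0:ℝ) ≤ ‖x‖ := norm_nonneg x
  match i with
  | 0 => rw [norm_iteratedFDeriv_zero]; linarith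
  | 1 =>
    rw [show (1:ℕ) = 0 + 1 from rfl, ← norm_iteratedFDeriv_fderiv, norm_iteratedFDeriv_zero]
    rw [fderiv_id']
    calc ‖ContinuousLinearMap.id ℝ E‖ ≤ 1 := ContinuousLinearMap.norm_id_le
    _ ≤ 1 + ‖x‖ := by linarith
  | (j+2) =>
    rw [← norm_iteratedFDeriv_fderiv]
    have : (fderiv ℝ (fun y : E => y)) = fun _ : E => ContinuousLinearMap.id ℝ E := by
      funext y; exact fderiv_id'
    rw [this, iteratedFDeriv_const_of_ne (Nat.succ_ne_zero j)]
    simp; linarith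

lemma gauss_hasTemperateGrowth {n : ℕ} {c : ℂ} (hc : c.re ≤ 0) :
    Function.HasTemperateGrowth (fun x : EN n => Complex.exp (c * (‖x‖ : ℂ) ^ 2)) := by
  have hqc : ContDiff ℝ ((⊤:ℕ∞) : WithTop ℕ∞) (fun x : EN n => (‖x‖ ^ 2 : ℝ)) := by
    simpa using (contDiff_norm_sq ℝ (E := EN n) (n := ((⊤:ℕ∞) : WithTop ℕ∞)))
  have hgc : ContDiff ℝ ((⊤:ℕ∞) : WithTop ℕ∞) (fun t : ℝ => Complex.exp (c * (t : ℂ))) := by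
    exact (ContDiff.cexp (contDiff_const.mul Complex.ofRealCLM.contDiff))
  have hgq : (fun x : EN n => Complex.exp (c * (‖x‖ : ℂ) ^ 2)) =
      (fun t : ℝ => Complex.exp (c * (t : ℂ))) ∘ (fun x : EN n => (‖x‖ ^ 2 : ℝ)) := by
    funext x; simp only [Function.comp_apply]; norm_cast
  constructor
  · rw [hgq]; exact hgc.comp hqc
  · intro N
    set S : ℝ := ‖(innerSL ℝ (E := EN n))‖ with hS
    have hS0 : 0 ≤ S := by rw [hS]; exact norm_nonneg (innerSL ℝ (E := EN n))
    refine ⟨2 * N, (N.factorial : ℝ) * (1 + ‖c‖) ^ N * (2 * (1 + S)) ^ N, fun x => ?_⟩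
    have hx0 : (0:ℝ) ≤ ‖x‖ := norm_nonneg x
    have hx1 : (1:ℝ) ≤ 1 + ‖x‖ := by linarith
    -- inner function bounds
    have hDq : ∀ i, 1 ≤ i → i ≤ N →
        ‖iteratedFDeriv ℝ i (fun x : EN n => (‖x‖ ^ 2 : ℝ)) x‖
          ≤ (2 * (1 + S) * (1 + ‖x‖) ^ 2) ^ i := by
      intro i hi1 _
      have hrw : (fun x : EN n => (‖x‖ ^ 2 : ℝ)) =
          fun y : EN n => (innerSL ℝ (E := EN n)) ((fun z : EN n => z) y) ((fun z : EN n => z) y) := by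
        funext y
        exact (real_inner_self_eq_norm_sq y).symm
      have hbil := (innerSL ℝ (E := EN n)).norm_iteratedFDeriv_le_of_bilinear
        (f := fun z : EN n => z) (g := fun z : EN n => z) contDiff_id contDiff_id x
        (n := i) (N := ((⊤:ℕ∞) : WithTop ℕ∞)) (mod_cast le_top)
      rw [hrw]
      refine hbil.trans ?_
      have hsum : ∑ k ∈ Finset.range (i + 1), (i.choose k : ℝ) *
            ‖iteratedFDeriv ℝ k (fun z : EN n => z) x‖ *
            ‖iteratedFDeriv ℝ (i - k) (fun z : EN n => z) x‖
          ≤ ∑ k ∈ Finset.range (i + 1), (i.choose k : ℝ) * ((1 + ‖x‖) * (1 + ‖x‖)) := by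
        refine Finset.sum_le_sum fun k _ => ?_
        have h1 := norm_iteratedFDeriv_id_le k x
        have h2 := norm_iteratedFDeriv_id_le (i - k) x
        have n1 : (0:ℝ) ≤ ‖iteratedFDeriv ℝ k (fun z : EN n => z) x‖ := norm_nonneg _
        have n2 : (0:ℝ) ≤ ‖iteratedFDeriv ℝ (i-k) (fun z : EN n => z) x‖ := norm_nonneg _
        have hc0 : (0:ℝ) ≤ (i.choose k : ℝ) := by positivity
        rw [mul_assoc]
        exact mul_le_mul_of_nonneg_left (mul_le_mul h1 h2 n2 (by linarith)) hc0
      have hchoose : ∑ k ∈ Finset.range (i + 1), (i.choose k : ℝ) = 2 ^ i := by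
        exact_mod_cast Nat.sum_range_choose i
      have : ∑ k ∈ Finset.range (i + 1), (i.choose k : ℝ) * ((1 + ‖x‖) * (1 + ‖x‖))
          = 2 ^ i * (1 + ‖x‖) ^ 2 := by
        rw [← Finset.sum_mul, hchoose]; ring
      rw [this] at hsum
      calc S * ∑ k ∈ Finset.range (i + 1), (i.choose k : ℝ) *
            ‖iteratedFDeriv ℝ k (fun z : EN n => z) x‖ *
            ‖iteratedFDeriv ℝ (i - k) (fun z : EN n => z) x‖
          ≤ S * (2 ^ i * (1 + ‖x‖) ^ 2) := by
            exact mul_le_mul_of_nonneg_left hsum hS0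
        _ ≤ (2 * (1 + S) * (1 + ‖x‖) ^ 2) ^ i := by
            rw [mul_pow, mul_pow]
            have h1 : S * (1 + ‖x‖)^2 ≤ (1 + S) ^ i * ((1 + ‖x‖) ^ 2) ^ i := by
              have e1 : (1 + S) ≤ (1 + S) ^ i := le_self_pow₀ (by linarith) (by omega)
              have e2 : (1 + ‖x‖)^2 ≤ ((1 + ‖x‖) ^ 2) ^ i :=
                le_self_pow₀ (by nlinarith) (by omega)
              nlinarith [pow_nonneg (by linarith : (0:ℝ) ≤ 1 + S) i,
                pow_nonneg (by nlinarith : (0:ℝ) ≤ (1+‖x‖)^2) i]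
            nlinarith [pow_pos (by norm_num : (0:ℝ) < 2) i]
    -- outer function bounds
    have hCg : ∀ i, i ≤ N →
        ‖iteratedFDeriv ℝ i (fun t : ℝ => Complex.exp (c * (t : ℂ))) ((‖x‖^2 : ℝ))‖
          ≤ (1 + ‖c‖) ^ N := by
      intro i hi
      rw [norm_iteratedFDeriv_eq_norm_iteratedDeriv, iteratedDeriv_cexp_const_mul_real]
      have hre : (c * ((‖x‖^2 : ℝ) : ℂ)).re ≤ 0 := by
        rw [mul_comm, Complex.re_ofReal_mul]
        have : (0:ℝ) ≤ ‖x‖^2 := by positivity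
        nlinarith
      have hexp : ‖Complex.exp (c * ((‖x‖^2 : ℝ) : ℂ))‖ ≤ 1 := by
        rw [Complex.norm_exp]
        exact Real.exp_le_one_iff.mpr hre
      calc ‖c ^ i * Complex.exp (c * ((‖x‖^2 : ℝ) : ℂ))‖
          = ‖c‖ ^ i * ‖Complex.exp (c * ((‖x‖^2 : ℝ) : ℂ))‖ := by rw [norm_mul, norm_pow]
        _ ≤ ‖c‖ ^ i * 1 := by
            exact mul_le_mul_of_nonneg_left hexp (by positivity)
        _ ≤ (1 + ‖c‖) ^ N := by
            rw [mul_one]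
            calc ‖c‖ ^ i ≤ (1 + ‖c‖) ^ i := by
                  exact pow_le_pow_left₀ (norm_nonneg c) (by linarith [norm_nonneg c]) i
              _ ≤ (1 + ‖c‖) ^ N := pow_le_pow_right₀ (by linarith [norm_nonneg c]) hi
    have hcomp := norm_iteratedFDeriv_comp_le (g := fun t : ℝ => Complex.exp (c * (t : ℂ)))
      (f := fun x : EN n => (‖x‖ ^ 2 : ℝ)) (n := N) (N := ((⊤:ℕ∞) : WithTop ℕ∞)) hgc hqc (mod_cast le_top) x
      hCg hDq
    rw [hgq]
    have : (2 * (1 + S) * (1 + ‖x‖) ^ 2) ^ N = (2 * (1 + S)) ^ N * (1 + ‖x‖) ^ (2 * N) := by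
      rw [mul_pow, ← pow_mul]
    rw [this] at hcomp
    calc ‖iteratedFDeriv ℝ N ((fun t : ℝ => Complex.exp (c * (t:ℂ))) ∘ fun x : EN n => (‖x‖^2:ℝ)) x‖
        ≤ (N.factorial : ℝ) * (1 + ‖c‖) ^ N * ((2 * (1 + S)) ^ N * (1 + ‖x‖) ^ (2 * N)) := hcomp
      _ = (N.factorial : ℝ) * (1 + ‖c‖) ^ N * (2 * (1 + S)) ^ N * (1 + ‖x‖) ^ (2 * N) := by ring

lemma epsI_ne_zero (ε : ℝ) : ((ε:ℂ) + I) ≠ 0 := by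
  intro h
  have := congrArg Complex.im h
  simp at this

lemma b_re_pos {ε : ℝ} (hε : 0 < ε) : 0 < ((π:ℂ) / ((ε:ℂ) + I)).re := by
  rw [Complex.div_re]
  have h1 : ((ε:ℂ) + I).re = ε := by simp
  have h2 : ((ε:ℂ) + I).im = 1 := by simp
  have hns : Complex.normSq ((ε:ℂ) + I) = ε^2 + 1 := by
    rw [Complex.normSq_apply, h1, h2]; ring
  rw [h1, h2, hns]
  simp only [Complex.ofReal_re, Complex.ofReal_im]
  have h3 : (0:ℝ) < ε^2+1 := by positivity
  have hπ : (0:ℝ) < π := Real.pi_pos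
  rw [zero_mul, zero_div, add_zero]
  positivity

lemma fourier_as_int {n : ℕ} (u : SchwartzMap (EN n) ℂ) (ξ : EN n) :
    ∫ x : EN n, u x * Complex.exp (-(2*(π:ℂ)*I) * ((⟪x, ξ⟫ : ℝ) : ℂ)) = 𝓕 (⇑u) ξ := by
  rw [Real.fourier_eq']
  congr 1
  funext x
  rw [smul_eq_mul, mul_comm]
  congr 1
  push_cast
  ring

lemma keyK {n : ℕ} (u : SchwartzMap (EN n) ℂ) (θ : EN n) :
    ∫ x : EN n, u x * Complex.exp (-(I * (π:ℂ)) * ((‖θ - x‖ : ℝ) : ℂ) ^ 2)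
      = Complex.exp (-((π:ℂ) * I * (n:ℂ)) / 4) *
        ∫ ξ : EN n, 𝓕 (⇑u) ξ * Complex.exp ((π:ℂ) * I * ((‖ξ‖ : ℝ) : ℂ) ^ 2) *
          Complex.exp (2 * (π:ℂ) * I * ((⟪θ, ξ⟫ : ℝ) : ℂ)) := by
  have hu_int : Integrable (⇑u) := u.integrable (μ := volume)
  have hu_cont : Continuous (⇑u) := u.continuous
  have hFu_int : Integrable (𝓕 (⇑u)) := by
    have h := (SchwartzMap.fourierTransformCLM ℂ u).integrable (μ := volume)
    rwa [SchwartzMap.fourierTransformCLM_apply] at h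
  have hFu_cont : Continuous (𝓕 (⇑u)) := by
    have h := (SchwartzMap.fourierTransformCLM ℂ u).continuous
    rwa [SchwartzMap.fourierTransformCLM_apply] at h
  set l : Filter ℝ := nhdsWithin (0:ℝ) (Set.Ioi 0) with hldef
  have hbase : Tendsto (fun ε : ℝ => ((ε:ℂ) + I)) l (𝓝 I) := by
    have h0 : Tendsto (fun ε : ℝ => ((ε:ℂ) + I)) (𝓝 (0:ℝ)) (𝓝 (((0:ℝ):ℂ) + I)) :=
      ((Complex.continuous_ofReal.add continuous_const).tendsto (0:ℝ))
    simpa using h0.mono_left nhdsWithin_le_nhds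
  -- Part A
  have hA : ∀ ε : ℝ, ε ∈ Set.Ioi (0:ℝ) →
      (∫ x : EN n, u x * Complex.exp (-(((ε:ℂ) + I) * (π:ℂ)) * ((‖θ - x‖ : ℝ) : ℂ) ^ 2))
        = ((ε:ℂ) + I) ^ (-(n:ℂ)/2) *
          ∫ ξ : EN n, 𝓕 (⇑u) ξ * Complex.exp (-((π:ℂ)/((ε:ℂ)+I)) * ((‖ξ‖ : ℝ) : ℂ) ^ 2) *
            Complex.exp (2 * (π:ℂ) * I * ((⟪θ, ξ⟫ : ℝ) : ℂ)) := by
    intro ε hε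
    rw [Set.mem_Ioi] at hε
    set z : ℂ := (ε:ℂ) + I with hz
    have hzne : z ≠ 0 := epsI_ne_zero ε
    set b : ℂ := (π:ℂ) / z with hb
    have hbre : 0 < b.re := b_re_pos hε
    have hπne : (π:ℂ) ≠ 0 := by exact_mod_cast Real.pi_ne_zero
    have hbne : b ≠ 0 := div_ne_zero hπne hzne
    have hfr : ((Module.finrank ℝ (EN n) : ℂ)) = (n:ℂ) := by
      norm_cast
      exact finrank_euclideanSpace_fin
    have hgauss : ∀ y : EN n,
        Complex.exp (-(z * (π:ℂ)) * ((‖y‖ : ℝ) : ℂ) ^ 2)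
          = z ^ (-(n:ℂ)/2) *
            ∫ ξ : EN n, Complex.exp (-b * ((‖ξ‖ : ℝ) : ℂ)^2 + (2*(π:ℂ)*I) * ((⟪y, ξ⟫ : ℝ) : ℂ)) := by
      intro y
      rw [GaussianFourier.integral_cexp_neg_mul_sq_norm_add hbre (2*(π:ℂ)*I) y]
      have h1 : ((π:ℂ)/b) = z := by
        rw [hb]; field_simp
      have h2 : ((Module.finrank ℝ (EN n) / 2 : ℂ)) = (n:ℂ)/2 := by rw [hfr]
      rw [h1, h2, ← mul_assoc, ← Complex.cpow_add _ _ hzne]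
      have he : -(n:ℂ)/2 + (n:ℂ)/2 = 0 := by ring
      rw [he, Complex.cpow_zero, one_mul]
      congr 1
      have h2pi : (2*(π:ℂ)*I)^2 = -(4*(π:ℂ)^2) := by
        rw [mul_pow, mul_pow, Complex.I_sq]; ring
      rw [h2pi, hb]
      field_simp
    -- swap integrability
    have hgint : Integrable (fun v : EN n => Complex.exp (-b * ((‖v‖:ℝ):ℂ)^2)) := by
      simpa using GaussianFourier.integrable_cexp_neg_mul_sq_norm_add hbre 0 (0 : EN n)
    have hinner : Continuous (fun p : EN n × EN n => (⟪θ - p.1, p.2⟫ : ℝ)) :=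
      (continuous_const.sub continuous_fst).inner continuous_snd
    have hcontF : Continuous (fun p : EN n × EN n =>
        u p.1 * Complex.exp (-b * ((‖p.2‖:ℝ):ℂ)^2 + (2*(π:ℂ)*I) * ((⟪θ - p.1, p.2⟫ : ℝ):ℂ))) := by
      apply (hu_cont.comp continuous_fst).mul
      apply Complex.continuous_exp.comp
      apply Continuous.add
      · exact continuous_const.mul ((Complex.continuous_ofReal.comp
          (continuous_norm.comp continuous_snd)).pow 2)
      · exact continuous_const.mul (Complex.continuous_ofReal.comp hinner)
    have hswap : Integrable (Function.uncurry (fun x ξ : EN n =>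
        u x * Complex.exp (-b * ((‖ξ‖:ℝ):ℂ)^2 + (2*(π:ℂ)*I) * ((⟪θ - x, ξ⟫ : ℝ):ℂ))))
        (volume.prod volume) := by
      apply Integrable.mono' (g := fun p : EN n × EN n =>
        ‖u p.1‖ * ‖Complex.exp (-b * ((‖p.2‖:ℝ):ℂ)^2)‖)
      · exact (hu_int.norm).mul_prod (hgint.norm)
      · exact hcontF.aestronglyMeasurable
      · apply Eventually.of_forall
        intro p
        rw [Function.uncurry, norm_mul]
        apply mul_le_mul_of_nonneg_left _ (norm_nonneg _)
        apply le_of_eq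
        rw [Complex.norm_exp, Complex.norm_exp]
        congr 1
        rw [Complex.add_re]
        have : ((2*(π:ℂ)*I) * ((⟪θ - p.1, p.2⟫ : ℝ):ℂ)).re = 0 := by
          simp [Complex.mul_re, Complex.mul_im]
        rw [this, add_zero]
    calc (∫ x : EN n, u x * Complex.exp (-(z * (π:ℂ)) * ((‖θ - x‖ : ℝ) : ℂ) ^ 2))
        = ∫ x : EN n, z ^ (-(n:ℂ)/2) * ∫ ξ : EN n,
            u x * Complex.exp (-b * ((‖ξ‖:ℝ):ℂ)^2 + (2*(π:ℂ)*I) * ((⟪θ - x, ξ⟫ : ℝ):ℂ)) := by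
          rw [show (fun x : EN n => u x * Complex.exp (-(z * (π:ℂ)) * ((‖θ - x‖ : ℝ) : ℂ) ^ 2))
              = (fun x : EN n => z ^ (-(n:ℂ)/2) * ∫ ξ : EN n,
                u x * Complex.exp (-b * ((‖ξ‖:ℝ):ℂ)^2 + (2*(π:ℂ)*I) * ((⟪θ - x, ξ⟫ : ℝ):ℂ)))
              from funext fun x => by rw [hgauss (θ - x), integral_const_mul]; ring]
      _ = z ^ (-(n:ℂ)/2) * ∫ x : EN n, ∫ ξ : EN n,
            u x * Complex.exp (-b * ((‖ξ‖:ℝ):ℂ)^2 + (2*(π:ℂ)*I) * ((⟪θ - x, ξ⟫ : ℝ):ℂ)) :=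
          integral_const_mul _ _
      _ = z ^ (-(n:ℂ)/2) * ∫ ξ : EN n, ∫ x : EN n,
            u x * Complex.exp (-b * ((‖ξ‖:ℝ):ℂ)^2 + (2*(π:ℂ)*I) * ((⟪θ - x, ξ⟫ : ℝ):ℂ)) := by
          congr 1
          exact integral_integral_swap hswap
      _ = z ^ (-(n:ℂ)/2) * ∫ ξ : EN n, 𝓕 (⇑u) ξ * Complex.exp (-b * ((‖ξ‖:ℝ):ℂ)^2) *
            Complex.exp (2*(π:ℂ)*I * ((⟪θ, ξ⟫ : ℝ):ℂ)) := by
          have h4 : (fun ξ : EN n => ∫ x : EN n,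
              u x * Complex.exp (-b * ((‖ξ‖:ℝ):ℂ)^2 + (2*(π:ℂ)*I) * ((⟪θ - x, ξ⟫ : ℝ):ℂ)))
              = (fun ξ : EN n => 𝓕 (⇑u) ξ * Complex.exp (-b * ((‖ξ‖:ℝ):ℂ)^2) *
                Complex.exp (2*(π:ℂ)*I * ((⟪θ, ξ⟫ : ℝ):ℂ))) := by
            refine funext fun ξ => ?_
            have hexp : ∀ x : EN n,
              u x * Complex.exp (-b * ((‖ξ‖:ℝ):ℂ)^2 + (2*(π:ℂ)*I) * ((⟪θ - x, ξ⟫ : ℝ):ℂ))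
                = (Complex.exp (-b * ((‖ξ‖:ℝ):ℂ)^2) * Complex.exp (2*(π:ℂ)*I * ((⟪θ, ξ⟫ : ℝ):ℂ)))
                  * (u x * Complex.exp (-(2*(π:ℂ)*I) * ((⟪x, ξ⟫ : ℝ):ℂ))) := by
              intro x
              rw [inner_sub_left]
              push_cast
              rw [show (-b * ((‖ξ‖:ℝ):ℂ)^2 + (2*(π:ℂ)*I) * (((⟪θ, ξ⟫:ℝ):ℂ) - ((⟪x, ξ⟫:ℝ):ℂ)))
                  = (-b * ((‖ξ‖:ℝ):ℂ)^2) + ((2*(π:ℂ)*I) * ((⟪θ, ξ⟫:ℝ):ℂ)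
                    + (-(2*(π:ℂ)*I) * ((⟪x, ξ⟫:ℝ):ℂ))) from by ring]
              rw [Complex.exp_add, Complex.exp_add]
              ring
            calc (∫ x : EN n, u x * Complex.exp (-b * ((‖ξ‖:ℝ):ℂ)^2
                    + (2*(π:ℂ)*I) * ((⟪θ - x, ξ⟫ : ℝ):ℂ)))
                = ∫ x : EN n, (Complex.exp (-b * ((‖ξ‖:ℝ):ℂ)^2)
                    * Complex.exp (2*(π:ℂ)*I * ((⟪θ, ξ⟫ : ℝ):ℂ)))
                    * (u x * Complex.exp (-(2*(π:ℂ)*I) * ((⟪x, ξ⟫ : ℝ):ℂ))) := by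
                  rw [show (fun x : EN n => u x * Complex.exp (-b * ((‖ξ‖:ℝ):ℂ)^2
                      + (2*(π:ℂ)*I) * ((⟪θ - x, ξ⟫ : ℝ):ℂ)))
                    = (fun x : EN n => (Complex.exp (-b * ((‖ξ‖:ℝ):ℂ)^2)
                      * Complex.exp (2*(π:ℂ)*I * ((⟪θ, ξ⟫ : ℝ):ℂ)))
                      * (u x * Complex.exp (-(2*(π:ℂ)*I) * ((⟪x, ξ⟫ : ℝ):ℂ))))
                    from funext fun x => hexp x]
              _ = (Complex.exp (-b * ((‖ξ‖:ℝ):ℂ)^2) * Complex.exp (2*(π:ℂ)*I * ((⟪θ, ξ⟫ : ℝ):ℂ)))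
                    * 𝓕 (⇑u) ξ := by
                  rw [integral_const_mul, fourier_as_int]
              _ = 𝓕 (⇑u) ξ * Complex.exp (-b * ((‖ξ‖:ℝ):ℂ)^2)
                    * Complex.exp (2*(π:ℂ)*I * ((⟪θ, ξ⟫ : ℝ):ℂ)) := by ring
          rw [h4]
  -- Part B
  have hB : Tendsto (fun ε : ℝ =>
      ∫ x : EN n, u x * Complex.exp (-(((ε:ℂ) + I) * (π:ℂ)) * ((‖θ - x‖ : ℝ) : ℂ) ^ 2)) l
      (𝓝 (∫ x : EN n, u x * Complex.exp (-(I * (π:ℂ)) * ((‖θ - x‖ : ℝ) : ℂ) ^ 2))) := by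
    apply tendsto_integral_filter_of_dominated_convergence (bound := fun x : EN n => ‖u x‖)
    · apply Eventually.of_forall
      intro ε
      apply Continuous.aestronglyMeasurable
      exact hu_cont.mul (Complex.continuous_exp.comp (continuous_const.mul
        ((Complex.continuous_ofReal.comp ((continuous_const.sub continuous_id).norm)).pow 2)))
    · filter_upwards [self_mem_nhdsWithin] with ε hε
      rw [Set.mem_Ioi] at hε
      apply Eventually.of_forall
      intro x
      rw [norm_mul]
      have h1 : ‖Complex.exp (-(((ε:ℂ) + I) * (π:ℂ)) * ((‖θ - x‖ : ℝ) : ℂ) ^ 2)‖ ≤ 1 := by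
        rw [Complex.norm_exp, Real.exp_le_one_iff]
        have hre : (-(((ε:ℂ) + I) * (π:ℂ)) * ((‖θ - x‖ : ℝ) : ℂ) ^ 2).re
            = -(ε * π * ‖θ - x‖^2) := by
          rw [show ((‖θ - x‖ : ℝ) : ℂ)^2 = ((‖θ - x‖^2 : ℝ) : ℂ) from by push_cast; ring,
            Complex.mul_re]
          simp only [Complex.ofReal_re, Complex.ofReal_im, Complex.neg_re, Complex.neg_im,
            Complex.mul_re, Complex.mul_im, Complex.add_re, Complex.add_im, Complex.I_re,
            Complex.I_im]
          ring
        rw [hre]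
        have h2 : (0:ℝ) ≤ ε * π * ‖θ - x‖^2 := by positivity
        linarith
      calc ‖u x‖ * ‖Complex.exp (-(((ε:ℂ) + I) * (π:ℂ)) * ((‖θ - x‖ : ℝ) : ℂ) ^ 2)‖
          ≤ ‖u x‖ * 1 := mul_le_mul_of_nonneg_left h1 (norm_nonneg _)
        _ = ‖u x‖ := mul_one _
    · exact hu_int.norm
    · apply Eventually.of_forall
      intro x
      have hcont : Continuous (fun w : ℂ => u x * Complex.exp (-(w * (π:ℂ)) * ((‖θ - x‖ : ℝ) : ℂ) ^ 2)) := by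
        apply continuous_const.mul
        apply Complex.continuous_exp.comp
        exact (continuous_id.mul continuous_const).neg.mul continuous_const
      exact (hcont.tendsto I).comp hbase
  -- Part C
  have hC1 : Tendsto (fun ε : ℝ => ((ε:ℂ) + I) ^ (-(n:ℂ)/2)) l (𝓝 (I ^ (-(n:ℂ)/2))) := by
    exact hbase.cpow tendsto_const_nhds (Complex.mem_slitPlane_iff.mpr (Or.inr (by simp)))
  have hIval : (I : ℂ) ^ (-(n:ℂ)/2) = Complex.exp (-((π:ℂ) * I * (n:ℂ)) / 4) := by
    rw [Complex.cpow_def_of_ne_zero Complex.I_ne_zero, Complex.log_I]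
    congr 1
    ring
  have hC2 : Tendsto (fun ε : ℝ =>
      ∫ ξ : EN n, 𝓕 (⇑u) ξ * Complex.exp (-((π:ℂ)/((ε:ℂ)+I)) * ((‖ξ‖ : ℝ) : ℂ) ^ 2) *
        Complex.exp (2 * (π:ℂ) * I * ((⟪θ, ξ⟫ : ℝ) : ℂ))) l
      (𝓝 (∫ ξ : EN n, 𝓕 (⇑u) ξ * Complex.exp ((π:ℂ) * I * ((‖ξ‖ : ℝ) : ℂ) ^ 2) *
        Complex.exp (2 * (π:ℂ) * I * ((⟪θ, ξ⟫ : ℝ) : ℂ)))) := by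
    apply tendsto_integral_filter_of_dominated_convergence (bound := fun ξ : EN n => ‖𝓕 (⇑u) ξ‖)
    · apply Eventually.of_forall
      intro ε
      apply Continuous.aestronglyMeasurable
      apply Continuous.mul
      · apply hFu_cont.mul
        apply Complex.continuous_exp.comp
        exact continuous_const.mul ((Complex.continuous_ofReal.comp continuous_norm).pow 2)
      · apply Complex.continuous_exp.comp
        exact continuous_const.mul (Complex.continuous_ofReal.comp
          ((continuous_const : Continuous fun _ : EN n => θ).inner continuous_id))
    · filter_upwards [self_mem_nhdsWithin] with ε hε
      rw [Set.mem_Ioi] at hε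
      apply Eventually.of_forall
      intro ξ
      rw [norm_mul, norm_mul]
      have e1 : ‖Complex.exp (-((π:ℂ)/((ε:ℂ)+I)) * ((‖ξ‖ : ℝ) : ℂ) ^ 2)‖ ≤ 1 := by
        rw [Complex.norm_exp, Real.exp_le_one_iff]
        have hsq : ((‖ξ‖ : ℝ) : ℂ)^2 = ((‖ξ‖^2 : ℝ) : ℂ) := by push_cast; ring
        rw [hsq]
        have h6 : (-((π:ℂ)/((ε:ℂ)+I)) * ((‖ξ‖^2 : ℝ) : ℂ)).re
            = -(((π:ℂ)/((ε:ℂ)+I)).re * ‖ξ‖^2) := by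
          rw [Complex.mul_re]
          simp only [Complex.ofReal_re, Complex.ofReal_im, Complex.neg_re, Complex.neg_im]
          ring
        rw [h6]
        have h4 := (b_re_pos hε).le
        have h5 := sq_nonneg ‖ξ‖
        have h7 : (0:ℝ) ≤ ((π:ℂ)/((ε:ℂ)+I)).re * ‖ξ‖^2 := mul_nonneg h4 h5
        linarith
      have e2 : ‖Complex.exp (2 * (π:ℂ) * I * ((⟪θ, ξ⟫ : ℝ) : ℂ))‖ = 1 := by
        rw [Complex.norm_exp]
        have : (2 * (π:ℂ) * I * ((⟪θ, ξ⟫ : ℝ) : ℂ)).re = 0 := by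
          simp [Complex.mul_re, Complex.mul_im]
        rw [this, Real.exp_zero]
      rw [e2, mul_one]
      calc ‖𝓕 (⇑u) ξ‖ * ‖Complex.exp (-((π:ℂ)/((ε:ℂ)+I)) * ((‖ξ‖ : ℝ) : ℂ) ^ 2)‖
          ≤ ‖𝓕 (⇑u) ξ‖ * 1 := mul_le_mul_of_nonneg_left e1 (norm_nonneg _)
        _ = ‖𝓕 (⇑u) ξ‖ := mul_one _
    · exact hFu_int.norm
    · apply Eventually.of_forall
      intro ξ
      have harg : -((π:ℂ)/I) * ((‖ξ‖ : ℝ) : ℂ)^2 = (π:ℂ) * I * ((‖ξ‖ : ℝ) : ℂ)^2 := by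
        rw [Complex.div_I]
        ring
      have hcont : ContinuousAt (fun w : ℂ => 𝓕 (⇑u) ξ *
          Complex.exp (-((π:ℂ)/w) * ((‖ξ‖ : ℝ) : ℂ) ^ 2) *
          Complex.exp (2 * (π:ℂ) * I * ((⟪θ, ξ⟫ : ℝ) : ℂ))) I := by
        apply ContinuousAt.mul _ continuousAt_const
        apply continuousAt_const.mul
        apply (Complex.continuous_exp.continuousAt).comp
        exact ((continuousAt_const.div continuousAt_id Complex.I_ne_zero).neg.mul
          continuousAt_const)
      have := hcont.tendsto.comp hbase
      rw [harg] at this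
      exact this
  -- combine
  have hRfin : Tendsto (fun ε : ℝ => ((ε:ℂ) + I) ^ (-(n:ℂ)/2) *
      ∫ ξ : EN n, 𝓕 (⇑u) ξ * Complex.exp (-((π:ℂ)/((ε:ℂ)+I)) * ((‖ξ‖ : ℝ) : ℂ) ^ 2) *
        Complex.exp (2 * (π:ℂ) * I * ((⟪θ, ξ⟫ : ℝ) : ℂ))) l
      (𝓝 (Complex.exp (-((π:ℂ) * I * (n:ℂ)) / 4) *
        ∫ ξ : EN n, 𝓕 (⇑u) ξ * Complex.exp ((π:ℂ) * I * ((‖ξ‖ : ℝ) : ℂ) ^ 2) *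
          Complex.exp (2 * (π:ℂ) * I * ((⟪θ, ξ⟫ : ℝ) : ℂ)))) := by
    have := hC1.mul hC2
    rwa [hIval] at this
  have hEq : (fun ε : ℝ =>
      ∫ x : EN n, u x * Complex.exp (-(((ε:ℂ) + I) * (π:ℂ)) * ((‖θ - x‖ : ℝ) : ℂ) ^ 2))
      =ᶠ[l] (fun ε : ℝ => ((ε:ℂ) + I) ^ (-(n:ℂ)/2) *
      ∫ ξ : EN n, 𝓕 (⇑u) ξ * Complex.exp (-((π:ℂ)/((ε:ℂ)+I)) * ((‖ξ‖ : ℝ) : ℂ) ^ 2) *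
        Complex.exp (2 * (π:ℂ) * I * ((⟪θ, ξ⟫ : ℝ) : ℂ))) := by
    filter_upwards [self_mem_nhdsWithin] with ε hε
    exact hA ε hε
  exact tendsto_nhds_unique hB (hRfin.congr' hEq.symm)

def FTinv {n : ℕ} (g : SchwartzMap (EN n) ℂ) : SchwartzMap (EN n) ℂ :=
  (SchwartzMap.fourierTransformCLE ℂ (SchwartzMap (EN n) ℂ)).symm g

def Gmul {n : ℕ} (g : SchwartzMap (EN n) ℂ) : SchwartzMap (EN n) ℂ :=
  SchwartzMap.bilinLeftCLM (ContinuousLinearMap.mul ℝ ℂ)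
    (gauss_hasTemperateGrowth (n := n) (c := -((π:ℂ)*I)) (by simp [Complex.mul_re])) g

lemma Gmul_apply {n : ℕ} (g : SchwartzMap (EN n) ℂ) (x : EN n) :
    Gmul g x = g x * Complex.exp (-((π:ℂ)*I) * ((‖x‖:ℝ) : ℂ) ^ 2) := rfl

lemma FTinv_coe {n : ℕ} (g : SchwartzMap (EN n) ℂ) : ⇑(FTinv g) = 𝓕⁻ ⇑g := by
  exact SchwartzMap.fourierInv_coe g

lemma fourier_FTinv {n : ℕ} (g : SchwartzMap (EN n) ℂ) : 𝓕 ⇑(FTinv g) = ⇑g := by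
  have h : 𝓕 ⇑((SchwartzMap.fourierTransformCLE ℂ (SchwartzMap (EN n) ℂ)).symm g)
      = ⇑(SchwartzMap.fourierTransformCLE ℂ (SchwartzMap (EN n) ℂ) ((SchwartzMap.fourierTransformCLE ℂ (SchwartzMap (EN n) ℂ)).symm g)) :=
    rfl
  rw [FTinv, h, (SchwartzMap.fourierTransformCLE ℂ (SchwartzMap (EN n) ℂ)).apply_symm_apply]

lemma FTinv_FTinv {n : ℕ} (g : SchwartzMap (EN n) ℂ) (θ : EN n) :
    FTinv (FTinv g) θ = g (-θ) := by
  calc FTinv (FTinv g) θ = 𝓕⁻ ⇑(FTinv g) θ := congrFun (FTinv_coe _) θ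
    _ = 𝓕 ⇑(FTinv g) (-θ) := Real.fourierInv_eq_fourier_neg _ _
    _ = g (-θ) := congrFun (fourier_FTinv g) _

lemma ftinv_as_int {n : ℕ} (g : SchwartzMap (EN n) ℂ) (θ : EN n) :
    ∫ v : EN n, g v * Complex.exp (2 * (π:ℂ) * I * ((⟪θ, v⟫ : ℝ) : ℂ)) = FTinv g θ := by
  rw [show (FTinv g) θ = 𝓕⁻ ⇑g θ from congrFun (FTinv_coe g) θ, Real.fourierInv_eq']
  congr 1
  funext v
  rw [smul_eq_mul, mul_comm]
  congr 1
  rw [real_inner_comm]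
  push_cast
  ring

lemma S_scale {n : ℕ} (j a : ℂ) (g : SchwartzMap (EN n) ℂ) :
    Sprime j (fun x => a * g x) = fun θ => (j * a) * FTinv g θ := by
  funext θ
  unfold Sprime
  rw [show (fun θt : EN n => (a * g θt) * Complex.exp (2 * (π:ℂ) * I * ((⟪θ, θt⟫ : ℝ) : ℂ)))
      = fun θt : EN n => a * (g θt * Complex.exp (2 * (π:ℂ) * I * ((⟪θ, θt⟫ : ℝ) : ℂ)))
    from funext fun _ => by ring]
  rw [integral_const_mul, ftinv_as_int]
  ring

lemma T_scale {n : ℕ} (ω a : ℂ) (g : SchwartzMap (EN n) ℂ) :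
    Tprime ω (fun x => a * g x) = fun θ => (ω * a) * Gmul g θ := by
  funext θ
  unfold Tprime
  rw [Gmul_apply]
  rw [show ((⟪θ, θ⟫ : ℝ) : ℂ) = ((‖θ‖:ℝ) : ℂ)^2 from by
    rw [real_inner_self_eq_norm_sq]; push_cast; ring]
  ring

lemma FTinv_const_mul {n : ℕ} (c : ℂ) (g : SchwartzMap (EN n) ℂ) (θ : EN n) :
    𝓕⁻ (fun x => c * g x) θ = c * 𝓕⁻ (⇑g) θ := by
  rw [Real.fourierInv_eq', Real.fourierInv_eq']
  simp_rw [smul_eq_mul]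
  rw [show (fun v : EN n => Complex.exp ((↑(2 * π * ⟪v, θ⟫) * I)) * (c * g v))
      = fun v : EN n => c * (Complex.exp ((↑(2 * π * ⟪v, θ⟫) * I)) * g v)
    from funext fun _ => by ring]
  rw [integral_const_mul]

lemma core3 {n : ℕ} (f : SchwartzMap (EN n) ℂ) (x : EN n) :
    Gmul (FTinv (Gmul (FTinv (Gmul f)))) x
      = Complex.exp (-((π:ℂ) * I * (n:ℂ)) / 4) * FTinv f x := by
  set u1 : SchwartzMap (EN n) ℂ := Gmul f with hu1
  set h1 : SchwartzMap (EN n) ℂ := FTinv u1 with hh1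
  set u2 : SchwartzMap (EN n) ℂ := Gmul h1 with hu2
  set h2 : SchwartzMap (EN n) ℂ := FTinv u2 with hh2
  have step1 : Gmul h2 x
      = ∫ y : EN n, h1 y * Complex.exp (-(I * (π:ℂ)) * ((‖x - y‖ : ℝ) : ℂ) ^ 2) := by
    rw [Gmul_apply, show h2 x = 𝓕⁻ ⇑u2 x from congrFun (FTinv_coe u2) x,
      Real.fourierInv_eq', ← integral_mul_const]
    congr 1
    funext v
    rw [smul_eq_mul, show u2 v = h1 v * Complex.exp (-((π:ℂ)*I) * ((‖v‖:ℝ):ℂ)^2)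
      from by rw [hu2]; exact Gmul_apply h1 v]
    have key : ((2 * π * (⟪v, x⟫:ℝ) : ℝ) : ℂ) * I + (-((π:ℂ)*I) * ((‖v‖:ℝ):ℂ)^2)
        + (-((π:ℂ)*I) * ((‖x‖:ℝ):ℂ)^2) = -(I * (π:ℂ)) * ((‖x - v‖ : ℝ) : ℂ) ^ 2 := by
      rw [show ((‖x - v‖ : ℝ) : ℂ)^2 = ((‖x - v‖^2 : ℝ) : ℂ) from by push_cast; ring,
        norm_sub_sq_real, real_inner_comm v x]
      push_cast
      ring
    calc Complex.exp (((2 * π * (⟪v, x⟫:ℝ) : ℝ) : ℂ) * I)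
          * (h1 v * Complex.exp (-((π:ℂ)*I) * ((‖v‖:ℝ):ℂ)^2))
          * Complex.exp (-((π:ℂ)*I) * ((‖x‖:ℝ):ℂ)^2)
        = h1 v * (Complex.exp (((2 * π * (⟪v, x⟫:ℝ) : ℝ) : ℂ) * I)
          * Complex.exp (-((π:ℂ)*I) * ((‖v‖:ℝ):ℂ)^2)
          * Complex.exp (-((π:ℂ)*I) * ((‖x‖:ℝ):ℂ)^2)) := by ring
      _ = h1 v * Complex.exp (((2 * π * (⟪v, x⟫:ℝ) : ℝ) : ℂ) * I
          + (-((π:ℂ)*I) * ((‖v‖:ℝ):ℂ)^2) + (-((π:ℂ)*I) * ((‖x‖:ℝ):ℂ)^2)) := by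
          rw [← Complex.exp_add, ← Complex.exp_add]
      _ = h1 v * Complex.exp (-(I * (π:ℂ)) * ((‖x - v‖ : ℝ) : ℂ) ^ 2) := by rw [key]
  have step3 : (fun ξ : EN n => 𝓕 (⇑h1) ξ * Complex.exp ((π:ℂ) * I * ((‖ξ‖ : ℝ) : ℂ) ^ 2) *
        Complex.exp (2 * (π:ℂ) * I * ((⟪x, ξ⟫ : ℝ) : ℂ)))
      = fun ξ : EN n => f ξ * Complex.exp (2 * (π:ℂ) * I * ((⟪x, ξ⟫ : ℝ) : ℂ)) := by
    funext ξ
    rw [hh1, fourier_FTinv u1, show u1 ξ = f ξ * Complex.exp (-((π:ℂ)*I) * ((‖ξ‖:ℝ):ℂ)^2)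
      from by rw [hu1]; exact Gmul_apply f ξ]
    calc f ξ * Complex.exp (-((π:ℂ)*I) * ((‖ξ‖:ℝ):ℂ)^2)
          * Complex.exp ((π:ℂ) * I * ((‖ξ‖ : ℝ) : ℂ) ^ 2)
          * Complex.exp (2 * (π:ℂ) * I * ((⟪x, ξ⟫ : ℝ) : ℂ))
        = f ξ * (Complex.exp (-((π:ℂ)*I) * ((‖ξ‖:ℝ):ℂ)^2)
          * Complex.exp ((π:ℂ) * I * ((‖ξ‖ : ℝ) : ℂ) ^ 2))
          * Complex.exp (2 * (π:ℂ) * I * ((⟪x, ξ⟫ : ℝ) : ℂ)) := by ring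
      _ = f ξ * Complex.exp (2 * (π:ℂ) * I * ((⟪x, ξ⟫ : ℝ) : ℂ)) := by
          rw [← Complex.exp_add, show -((π:ℂ)*I) * ((‖ξ‖:ℝ):ℂ)^2
            + (π:ℂ) * I * ((‖ξ‖ : ℝ) : ℂ) ^ 2 = 0 from by ring, Complex.exp_zero, mul_one]
  rw [step1, keyK h1 x, step3, ftinv_as_int f x]

/-- if `j⁴ = 1` and `ω³ = i^{n/2} j⁻¹` (with `i^{n/2} = e^{πin/4}`),
then the operators `S' = j·ℱ_E` and `T' = ω·𝒢_E⁻¹` acting on Schwartz functions on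
`E` satisfy the `SL(2,ℤ)` relations `S'⁴ = Id` and `S'² = (S'T')³`. -/
theorem Sprime_Tprime_SL2Z_relations
    (n : ℕ) (j ω : ℂ) (hj : j ^ 4 = 1)
    (hω : ω ^ 3 = Complex.exp ((π : ℂ) * I * (n : ℂ) / 4) * j⁻¹)
    (f : SchwartzMap (EN n) ℂ) :
    ∀ θ : EN n,
      ((Sprime j)^[4] ⇑f) θ = f θ ∧
      ((Sprime j)^[2] ⇑f) θ = ((fun g => Sprime j (Tprime ω g))^[3] ⇑f) θ := by

  have hjne : j ≠ 0 := by
    intro h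
    rw [h] at hj
    simp at hj
  have e0 : (⇑f : EN n → ℂ) = fun x => (1:ℂ) * f x := funext fun x => (one_mul _).symm
  have hit4 : (Sprime j)^[4] ⇑f = Sprime j (Sprime j (Sprime j (Sprime j ⇑f))) := by
    rw [Function.iterate_succ_apply', Function.iterate_succ_apply',
      Function.iterate_succ_apply', Function.iterate_succ_apply', Function.iterate_zero_apply]
  have hit2 : (Sprime j)^[2] ⇑f = Sprime j (Sprime j ⇑f) := by
    rw [Function.iterate_succ_apply', Function.iterate_succ_apply', Function.iterate_zero_apply]
  have hit3 : (fun g => Sprime j (Tprime ω g))^[3] ⇑f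
      = Sprime j (Tprime ω (Sprime j (Tprime ω (Sprime j (Tprime ω ⇑f))))) := by
    rw [Function.iterate_succ_apply', Function.iterate_succ_apply',
      Function.iterate_succ_apply', Function.iterate_zero_apply]
  have hchain4 : (Sprime j)^[4] ⇑f
      = fun θ' => (j*(j*(j*(j*1)))) * FTinv (FTinv (FTinv (FTinv f))) θ' := by
    rw [hit4, e0, S_scale j 1 f, S_scale j (j*1) (FTinv f),
      S_scale j (j*(j*1)) (FTinv (FTinv f)), S_scale j (j*(j*(j*1))) (FTinv (FTinv (FTinv f)))]
  have hchain2 : (Sprime j)^[2] ⇑f = fun θ' => (j*(j*1)) * FTinv (FTinv f) θ' := by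
    rw [hit2, e0, S_scale j 1 f, S_scale j (j*1) (FTinv f)]
  have hchain3 : (fun g => Sprime j (Tprime ω g))^[3] ⇑f
      = fun θ' => (j*(ω*(j*(ω*(j*(ω*1)))))) *
        FTinv (Gmul (FTinv (Gmul (FTinv (Gmul f))))) θ' := by
    rw [hit3, e0, T_scale ω 1 f, S_scale j (ω*1) (Gmul f),
      T_scale ω (j*(ω*1)) (FTinv (Gmul f)), S_scale j (ω*(j*(ω*1))) (Gmul (FTinv (Gmul f))),
      T_scale ω (j*(ω*(j*(ω*1)))) (FTinv (Gmul (FTinv (Gmul f)))),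
      S_scale j (ω*(j*(ω*(j*(ω*1))))) (Gmul (FTinv (Gmul (FTinv (Gmul f)))))]
  intro θ
  constructor
  · calc ((Sprime j)^[4] ⇑f) θ
        = (j*(j*(j*(j*1)))) * FTinv (FTinv (FTinv (FTinv f))) θ := by rw [hchain4]
      _ = j^4 * f θ := by rw [FTinv_FTinv, FTinv_FTinv, neg_neg]; ring
      _ = f θ := by rw [hj, one_mul]
  · have hval : FTinv (Gmul (FTinv (Gmul (FTinv (Gmul f))))) θ
        = Complex.exp (-((π:ℂ)*I*(n:ℂ))/4) * f (-θ) := by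
      have hfn : ⇑(Gmul (FTinv (Gmul (FTinv (Gmul f)))))
          = fun x => Complex.exp (-((π:ℂ)*I*(n:ℂ))/4) * FTinv f x := funext fun x => core3 f x
      calc FTinv (Gmul (FTinv (Gmul (FTinv (Gmul f))))) θ
          = 𝓕⁻ ⇑(Gmul (FTinv (Gmul (FTinv (Gmul f))))) θ := congrFun (FTinv_coe _) θ
        _ = 𝓕⁻ (fun x => Complex.exp (-((π:ℂ)*I*(n:ℂ))/4) * FTinv f x) θ := by rw [hfn]
        _ = Complex.exp (-((π:ℂ)*I*(n:ℂ))/4) * 𝓕⁻ ⇑(FTinv f) θ := FTinv_const_mul _ _ θ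
        _ = Complex.exp (-((π:ℂ)*I*(n:ℂ))/4) * f (-θ) := by
            rw [show 𝓕⁻ ⇑(FTinv f) θ = FTinv (FTinv f) θ
              from (congrFun (FTinv_coe (FTinv f)) θ).symm, FTinv_FTinv]
    have hsc : (j*(ω*(j*(ω*(j*(ω*1)))))) * Complex.exp (-((π:ℂ)*I*(n:ℂ))/4) = j^2 := by
      rw [show (j*(ω*(j*(ω*(j*(ω*1)))))) = j^3 * ω^3 from by ring, hω]
      have h2 : Complex.exp ((π:ℂ)*I*(n:ℂ)/4) * Complex.exp (-((π:ℂ)*I*(n:ℂ))/4) = 1 := by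
        rw [← Complex.exp_add, show (π:ℂ)*I*(n:ℂ)/4 + -((π:ℂ)*I*(n:ℂ))/4 = 0 from by ring,
          Complex.exp_zero]
      calc j^3 * (Complex.exp ((π:ℂ)*I*(n:ℂ)/4) * j⁻¹) * Complex.exp (-((π:ℂ)*I*(n:ℂ))/4)
          = (j^3 * j⁻¹) * (Complex.exp ((π:ℂ)*I*(n:ℂ)/4)
            * Complex.exp (-((π:ℂ)*I*(n:ℂ))/4)) := by ring
        _ = j^3 * j⁻¹ := by rw [h2, mul_one]
        _ = j^2 := by rw [pow_succ, mul_assoc, mul_inv_cancel₀ hjne, mul_one]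
    calc ((Sprime j)^[2] ⇑f) θ
        = (j*(j*1)) * FTinv (FTinv f) θ := by rw [hchain2]
      _ = j^2 * f (-θ) := by rw [FTinv_FTinv]; ring
      _ = (j*(ω*(j*(ω*(j*(ω*1)))))) * (Complex.exp (-((π:ℂ)*I*(n:ℂ))/4) * f (-θ)) := by
          rw [← mul_assoc, hsc]
      _ = ((fun g => Sprime j (Tprime ω g))^[3] ⇑f) θ := by
          rw [hchain3]
          exact (congrArg (fun t => j*(ω*(j*(ω*(j*(ω*1))))) * t) hval).symm

end
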